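/- Let C be a category and F : C → C an endofunctor. Let b : B → F B be a coalgebra and suppose a : F A → A is an algebra initial relative to b. Then a : F A → A is an isomorphism; in particular A is a fixed point of F. -/
import Mathlib


open CategoryTheory

/-- If `a : F A ⟶ A` is initial relative to the coalgebra `b : B ⟶ F B`
(there is a bijection, natural in the algebra `(X, x)`, between algebra
morphisms out of `a` and coalgebra-to-algebra morphisms from `b`), then `a`
is an isomorphism. -/
theorem relatively_initial_algebra_is_fixed_point
    {C : Type*} [Category C] (F : C ⥤ C)
    {A B : C} (a : F.obj A ⟶ A) (b : B ⟶ F.obj B)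
    (ψ : ∀ (X : C) (x : F.obj X ⟶ X),
      {f : A ⟶ X // F.map f ≫ x = a ≫ f} ≃ {f : B ⟶ X // f = b ≫ F.map f ≫ x})
    (nat : ∀ (X Y : C) (x : F.obj X ⟶ X) (y : F.obj Y ⟶ Y) (g : X ⟶ Y)
      (hg : F.map g ≫ y = x ≫ g)
      (f : A ⟶ X) (hf : F.map f ≫ x = a ≫ f)
      (hfg : F.map (f ≫ g) ≫ y = a ≫ (f ≫ g)),
      ((ψ Y y) ⟨f ≫ g, hfg⟩ : B ⟶ Y) = ((ψ X x) ⟨f, hf⟩ : B ⟶ X) ≫ g) :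
    IsIso a := by
  -- the hylomorphism corresponding to the identity algebra morphism
  set h : {f : B ⟶ A // f = b ≫ F.map f ≫ a} :=
    ψ A a ⟨𝟙 A, by simp⟩ with hh
  have hhyl : h.1 = b ≫ F.map h.1 ≫ a := h.2
  -- `b ≫ F h` is a hylomorphism into the algebra `F.map a`
  have hyl2 : b ≫ F.map h.1 = b ≫ F.map (b ≫ F.map h.1) ≫ F.map a := by
    conv_lhs => rw [hhyl]
    simp [F.map_comp]
  -- its corresponding algebra morphism
  set k : {f : A ⟶ F.obj A // F.map f ≫ F.map a = a ≫ f} :=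
    (ψ (F.obj A) (F.map a)).symm ⟨b ≫ F.map h.1, hyl2⟩ with hk
  have hkψ : ψ (F.obj A) (F.map a) k = ⟨b ≫ F.map h.1, hyl2⟩ := by
    rw [hk, Equiv.apply_symm_apply]
  have hka : F.map (k.1 ≫ a) ≫ a = a ≫ (k.1 ≫ a) := by
    rw [F.map_comp, Category.assoc, ← Category.assoc, k.2, Category.assoc]
  -- `k ≫ a = 𝟙 A` via injectivity of ψ
  have key : (⟨k.1 ≫ a, hka⟩ : {f : A ⟶ A // F.map f ≫ a = a ≫ f}) =
      ⟨𝟙 A, by simp⟩ := by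
    apply (ψ A a).injective
    have := nat (F.obj A) A (F.map a) a a rfl k.1 k.2 hka
    apply Subtype.ext
    have hkk : (ψ (F.obj A) (F.map a)) ⟨k.1, k.2⟩ = ⟨b ≫ F.map h.1, hyl2⟩ := hkψ
    rw [show ((ψ A a) ⟨k.1 ≫ a, hka⟩ : B ⟶ A)
        = ((ψ (F.obj A) (F.map a)) ⟨k.1, k.2⟩ : B ⟶ F.obj A) ≫ a from this,
      hkk]
    simpa [Category.assoc] using hhyl.symm
  have hk1 : k.1 ≫ a = 𝟙 A := congrArg Subtype.val key
  have hk2 : a ≫ k.1 = 𝟙 (F.obj A) := by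
    rw [← k.2, ← F.map_comp, hk1, F.map_id]
  exact ⟨k.1, hk2, hk1⟩
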